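/- arXiv:1706.00350 — 2 statements merged into one kernel-verified Lean document; each statement's English description precedes it below -/
import Mathlib

section
/- Let N ≥ 2, 1 ≤ M < N, and D ≥ 1 be integers. For every τ ∈ (0,1), P_D'(τ) = 0 if and only if H_1(τ) = H_2(τ). -/
open Finset Set

noncomputable def f1 (N M : ℕ) (τ : ℝ) : ℝ :=
  ∑ i ∈ range M, ((N-1).choose i : ℝ) * τ^i * (1-τ)^(N-1-i)

noncomputable def f2 (N M : ℕ) (τ : ℝ) : ℝ :=
  ∑ i ∈ range M, (i : ℝ) * ((N-1).choose i : ℝ) * τ^i * (1-τ)^(N-1-i)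

noncomputable def H1 (N M : ℕ) (τ : ℝ) : ℝ := f2 N M τ / f1 N M τ

noncomputable def H2 (N D : ℕ) (τ : ℝ) : ℝ :=
  τ * ((N:ℝ) + (D:ℝ) - 1 - (D:ℝ) / (1 - (1-τ)^D))

noncomputable def P (N M D : ℕ) (τ : ℝ) : ℝ := (1 - (1 - τ)^D) * f1 N M τ

lemma f1_deriv (N M : ℕ) (hMN : M < N) (τ : ℝ) :
    ∃ d : ℝ, HasDerivAt (f1 N M) d τ ∧
      τ*(1-τ)*d = f2 N M τ - ((N-1:ℕ):ℝ)*τ*(f1 N M τ) := by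
  set n := N - 1 with hn
  refine ⟨∑ i ∈ range M,
    (((n.choose i : ℝ)*((i:ℝ)*τ^(i-1))) * (1-τ)^(n-i)
      + ((n.choose i:ℝ)*τ^i) * (((n-i:ℕ):ℝ)*(1-τ)^(n-i-1)*(-1))), ?_, ?_⟩
  · unfold f1
    apply HasDerivAt.fun_sum
    intro i hi
    have h1 : HasDerivAt (fun τ : ℝ => (n.choose i : ℝ)*τ^i)
        ((n.choose i:ℝ)*((i:ℝ)*τ^(i-1))) τ := (hasDerivAt_pow i τ).const_mul _
    have h2 : HasDerivAt (fun τ : ℝ => (1-τ)^(n-i))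
        (((n-i:ℕ):ℝ)*(1-τ)^(n-i-1)*(-1)) τ := by
      have := (hasDerivAt_pow (n-i) (1-τ)).comp τ
        ((hasDerivAt_const τ (1:ℝ)).sub (hasDerivAt_id τ))
      simp at this ⊢; exact this
    simpa [mul_assoc] using h1.fun_mul h2
  · unfold f2 f1
    rw [Finset.mul_sum, Finset.mul_sum, ← Finset.sum_sub_distrib]
    apply Finset.sum_congr rfl
    intro i hi
    have hin : i < n := by simp at hi; omega
    have hcast : ((n-i:ℕ):ℝ) = (n:ℝ) - (i:ℝ) := by
      rw [Nat.cast_sub hin.le]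
    have hp1 : τ * τ ^ (i-1) * (i:ℝ) = τ^i * (i:ℝ) := by
      cases i with
      | zero => simp
      | succ k => rw [Nat.add_sub_cancel, pow_succ]; ring
    have hp2 : (1-τ) * (1-τ)^(n-i-1) = (1-τ)^(n-i) := by
      rw [← pow_succ']
      congr 1
      omega
    rw [hcast]
    linear_combination ((n.choose i:ℝ)*(1-τ)*(1-τ)^(n-i)) * hp1
      - ((n.choose i:ℝ)*τ*((n:ℝ)-(i:ℝ))*τ^i) * hp2


theorem stmt3 (N M D : ℕ) (hN : 2 ≤ N) (hM : 1 ≤ M) (hMN : M < N) (hD : 1 ≤ D) :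
    ∀ τ ∈ Ioo (0:ℝ) 1, deriv (P N M D) τ = 0 ↔ H1 N M τ = H2 N D τ := by
  rintro τ ⟨hτ0, hτ1⟩
  have h1τ : (0:ℝ) < 1 - τ := by linarith
  obtain ⟨d, hd, hident⟩ := f1_deriv N M hMN τ
  have hcastN : ((N-1:ℕ):ℝ) = (N:ℝ) - 1 := by
    rw [Nat.cast_sub (by omega)]; norm_num
  rw [hcastN] at hident
  set a := f1 N M τ with ha_def
  set F2 := f2 N M τ with hF2_def
  set g := 1 - (1-τ)^D with hg_def
  have ha : 0 < a := by
    rw [ha_def]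
    unfold f1
    apply Finset.sum_pos
    · intro i hi
      simp only [Finset.mem_range] at hi
      have hc : 0 < ((N-1).choose i : ℝ) := by
        exact_mod_cast Nat.choose_pos (by omega)
      positivity
    · exact Finset.nonempty_range_iff.mpr (by omega)
  have hgpos : 0 < g := by
    rw [hg_def]
    have : (1-τ)^D < 1 := pow_lt_one₀ h1τ.le (by linarith) (by omega)
    linarith
  have hgderiv : HasDerivAt (fun t : ℝ => 1 - (1-t)^D) ((D:ℝ)*(1-τ)^(D-1)) τ := by
    have h2 := (hasDerivAt_pow D (1-τ)).comp τ
      ((hasDerivAt_const τ (1:ℝ)).sub (hasDerivAt_id τ))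
    have := (hasDerivAt_const τ (1:ℝ)).sub h2
    simp at this; exact this
  have hP : HasDerivAt (P N M D) ((D:ℝ)*(1-τ)^(D-1) * a + g * d) τ := by
    have : P N M D = fun t => (1 - (1-t)^D) * f1 N M t := rfl
    rw [this]
    exact hgderiv.mul hd
  rw [hP.deriv]
  have hpowD : (1-τ) * (1-τ)^(D-1) = (1-τ)^D := by
    rw [← pow_succ']; congr 1; omega
  have key : τ*(1-τ)*((D:ℝ)*(1-τ)^(D-1) * a + g * d)
      = (D:ℝ)*τ*(1-τ)^D * a + g * (F2 - ((N:ℝ)-1)*τ*a) := by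
    linear_combination g * hident + ((D:ℝ)*τ*a) * hpowD
  have hH : H1 N M τ = H2 N D τ ↔ F2 * g = τ*(((N:ℝ)+(D:ℝ)-1)*g - (D:ℝ))*a := by
    unfold H1 H2
    rw [← ha_def, ← hF2_def, ← hg_def, div_eq_iff ha.ne']
    constructor
    · intro h
      field_simp at h
      linear_combination h
    · intro h
      field_simp
      linear_combination h
  rw [hH]
  constructor
  · intro h
    have h0 : τ*(1-τ)*((D:ℝ)*(1-τ)^(D-1) * a + g * d) = 0 := by rw [h, mul_zero]
    rw [key] at h0
    have hgD : g = 1 - (1-τ)^D := hg_def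
    linear_combination h0 + ((D:ℝ)*τ*a - F2 - ((N:ℝ)-1)*τ*a + τ*((N:ℝ)+(D:ℝ)-1)*a) * hgD
  · intro h
    have h0 : τ*(1-τ)*((D:ℝ)*(1-τ)^(D-1) * a + g * d) = 0 := by
      rw [key]
      have hgD : g = 1 - (1-τ)^D := hg_def
      linear_combination h + (F2 + ((N:ℝ)-1)*τ*a - (D:ℝ)*τ*a - τ*((N:ℝ)+(D:ℝ)-1)*a) * hgD
    rcases mul_eq_zero.mp h0 with h' | h'
    · exact absurd h' (by positivity)
    · exact h'
end

section
/- Let N ≥ 2, 1 ≤ M < N, and D ≥ 1 be integers. The equation H_1(τ) = H_2(τ) has a unique solution τ* in the interval (0,1), and τ* is the unique maximizer of P_D on [0,1]: P_D(τ*) > P_D(τ) for every τ ∈ [0,1] with τ ≠ τ*. -/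
open Finset Set

namespace S13

/-- the Beta kernel -/
noncomputable def w (N M : ℕ) (t : ℝ) : ℝ := t^(M-1) * (1-t)^(N-1-M)

/-- derivative of the Beta kernel -/
noncomputable def wd (N M : ℕ) (t : ℝ) : ℝ :=
  ((M-1 : ℕ) : ℝ) * t^(M-2) * (1-t)^(N-1-M) - ((N-1-M : ℕ) : ℝ) * t^(M-1) * (1-t)^(N-2-M)

noncomputable def cc (N M : ℕ) : ℝ := ((N-1 : ℕ) : ℝ) * (((N-2).choose (M-1) : ℕ) : ℝ)

/-- per-term derivative of f1 -/
noncomputable def td (N i : ℕ) (t : ℝ) : ℝ :=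
  ((N-1).choose i : ℝ) * ((i:ℝ) * t^(i-1) * (1-t)^(N-1-i) - ((N-1-i : ℕ) : ℝ) * t^i * (1-t)^(N-2-i))

lemma hasDerivAt_w (N M : ℕ) (t : ℝ) : HasDerivAt (w N M) (wd N M t) t := by
  have h1 : HasDerivAt (fun x : ℝ => x^(M-1)) (((M-1:ℕ):ℝ) * t^(M-1-1)) t := hasDerivAt_pow _ t
  have h2 : HasDerivAt (fun x : ℝ => (1-x)^(N-1-M))
      (((N-1-M:ℕ):ℝ) * (1-t)^(N-1-M-1) * (-1)) t :=
    ((hasDerivAt_id t).const_sub 1).pow (N-1-M)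
  have := h1.mul h2
  refine this.congr_deriv ?_
  have e1 : M-1-1 = M-2 := by omega
  have e2 : N-1-M-1 = N-2-M := by omega
  rw [e1, e2]; unfold wd; ring

lemma hasDerivAt_term (N M i : ℕ) (t : ℝ) (hi : i ≤ N-2) :
    HasDerivAt (fun x : ℝ => ((N-1).choose i : ℝ) * x^i * (1-x)^(N-1-i)) (td N i t) t := by
  have h1 : HasDerivAt (fun x : ℝ => ((N-1).choose i : ℝ) * x^i)
      (((N-1).choose i : ℝ) * ((i:ℝ) * t^(i-1))) t := (hasDerivAt_pow i t).const_mul _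
  have h2 : HasDerivAt (fun x : ℝ => (1-x)^(N-1-i))
      (((N-1-i:ℕ):ℝ) * (1-t)^(N-1-i-1) * (-1)) t :=
    ((hasDerivAt_id t).const_sub 1).pow (N-1-i)
  have := h1.mul h2
  refine this.congr_deriv ?_
  have e2 : N-1-i-1 = N-2-i := by omega
  rw [e2]; unfold td; ring

lemma telescope (N M : ℕ) (hN : 2 ≤ N) (hM : 1 ≤ M) (hMN : M < N) (t : ℝ) :
    ∑ i ∈ range M, td N i t = -(cc N M * w N M t) := by
  have key : ∀ i < M, td N i t =
      (if i = 0 then 0 else ((N-1:ℕ):ℝ) * ((N-2).choose (i-1) : ℝ) * t^(i-1) * (1-t)^(N-1-i))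
      - ((N-1:ℕ):ℝ) * ((N-2).choose i : ℝ) * t^i * (1-t)^(N-2-i) := by
    intro i hiM
    have hi2 : i ≤ N-2 := by omega
    have c2 : ((N-2).choose i : ℝ) * ((N-1:ℕ):ℝ) = ((N-1).choose i : ℝ) * ((N-1-i:ℕ):ℝ) := by
      have h := Nat.choose_mul_succ_eq (N-2) i
      have e : N-2+1 = N-1 := by omega
      rw [e] at h
      exact_mod_cast congrArg (Nat.cast (R := ℝ)) h
    rcases Nat.eq_zero_or_pos i with h0 | hpos
    · subst h0
      simp only [Nat.sub_zero] at c2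
      simp only [td, Nat.sub_zero, Nat.cast_zero, if_true, reduceIte]
      linear_combination (t^(0:ℕ) * (1-t)^(N-2)) * c2
    · have c1 : ((N-1:ℕ):ℝ) * ((N-2).choose (i-1) : ℝ) = ((N-1).choose i : ℝ) * (i:ℝ) := by
        have h := Nat.add_one_mul_choose_eq (N-2) (i-1)
        have e : N-2+1 = N-1 := by omega
        have e2 : i-1+1 = i := by omega
        rw [e, e2] at h
        exact_mod_cast congrArg (Nat.cast (R := ℝ)) h
      rw [if_neg (by omega)]
      unfold td
      linear_combination (t^(i-1) * (1-t)^(N-1-i)) * c1.symm + (t^i * (1-t)^(N-2-i)) * c2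
  have e1 : ∀ i : ℕ, N-1-(i+1) = N-2-i := by intro i; omega
  set h : ℕ → ℝ := fun j =>
    if j = 0 then 0 else ((N-1:ℕ):ℝ) * ((N-2).choose (j-1) : ℝ) * t^(j-1) * (1-t)^(N-1-j) with hh
  have hsum : ∑ i ∈ range M, td N i t = ∑ i ∈ range M, (h i - h (i+1)) := by
    apply Finset.sum_congr rfl
    intro i hi
    rw [key i (mem_range.mp hi)]
    simp only [hh, if_neg (Nat.succ_ne_zero i), Nat.add_sub_cancel, e1 i]
  rw [hsum, Finset.sum_range_sub' h M]
  simp only [hh, if_pos rfl, if_neg (by omega : ¬ (M = 0))]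
  unfold cc w
  ring

variable {N M : ℕ}

lemma hasDerivAt_f1 (hN : 2 ≤ N) (hM : 1 ≤ M) (hMN : M < N) (t : ℝ) :
    HasDerivAt (f1 N M) (-(cc N M * w N M t)) t := by
  rw [← telescope N M hN hM hMN t]
  unfold f1
  exact HasDerivAt.fun_sum fun i hi => hasDerivAt_term N M i t (by
    have := mem_range.mp hi; omega)

lemma continuous_w : Continuous (w N M) := by
  unfold w; fun_prop

lemma continuous_wd : Continuous (wd N M) := by
  unfold wd; fun_prop

lemma continuous_f1 : Continuous (f1 N M) := by
  unfold f1; fun_prop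

lemma f1_one (hMN : M < N) : f1 N M 1 = 0 := by
  unfold f1
  apply Finset.sum_eq_zero
  intro i hi
  have : N-1-i ≠ 0 := by have := mem_range.mp hi; omega
  simp [zero_pow this]

lemma w_nonneg {t : ℝ} (h0 : 0 ≤ t) (h1 : t ≤ 1) : 0 ≤ w N M t := by
  unfold w
  have h : (0:ℝ) ≤ 1 - t := by linarith
  positivity

lemma cc_pos (hN : 2 ≤ N) (hM : 1 ≤ M) (hMN : M < N) : 0 < cc N M := by
  unfold cc
  have h1 : 0 < N - 1 := by omega
  have h2 : 0 < (N-2).choose (M-1) := Nat.choose_pos (by omega)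
  positivity

lemma f1_pos {t : ℝ} (hMN : M < N) (hM : 1 ≤ M) (h0 : 0 ≤ t) (h1 : t < 1) :
    0 < f1 N M t := by
  unfold f1
  have ht : (0:ℝ) < 1 - t := by linarith
  have h00 : (0:ℝ) < ((N-1).choose 0 : ℝ) * t^0 * (1-t)^(N-1-0) := by
    simp only [Nat.choose_zero_right, Nat.cast_one, pow_zero]
    positivity
  have hle : ((N-1).choose 0 : ℝ) * t^0 * (1-t)^(N-1-0) ≤
      ∑ i ∈ range M, ((N-1).choose i : ℝ) * t^i * (1-t)^(N-1-i) :=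
    Finset.single_le_sum (f := fun i => ((N-1).choose i : ℝ) * t^i * (1-t)^(N-1-i))
      (fun i _ => by positivity) (mem_range.mpr (by omega))
  linarith

/-- integral of w from τ to 1 -/
noncomputable def WW (N M : ℕ) (τ : ℝ) : ℝ := ∫ s in τ..1, w N M s

lemma hasDerivAt_WW (t : ℝ) : HasDerivAt (WW N M) (-(w N M t)) t := by
  have h : (fun u : ℝ => -∫ s in (1:ℝ)..u, w N M s) = WW N M := by
    funext τ
    rw [← intervalIntegral.integral_symm]
    rfl
  rw [← h]
  exact (((continuous_w (N := N) (M := M)).integral_hasStrictDerivAt 1 t).hasDerivAt).neg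

lemma f1_eq_int (hN : 2 ≤ N) (hM : 1 ≤ M) (hMN : M < N) (t : ℝ) :
    f1 N M t = cc N M * WW N M t := by
  have hg : ∀ x : ℝ, HasDerivAt (fun τ => f1 N M τ - cc N M * WW N M τ) 0 x := by
    intro x
    have h := (hasDerivAt_f1 hN hM hMN x).sub
      ((hasDerivAt_WW (N := N) (M := M) x).const_mul (cc N M))
    refine h.congr_deriv ?_
    ring
  have hconst := is_const_of_deriv_eq_zero (fun x => (hg x).differentiableAt)
    (fun x => (hg x).deriv) t 1
  have hW1 : WW N M 1 = 0 := by unfold WW; simp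
  have := hconst
  rw [f1_one hMN, hW1, mul_zero, sub_zero] at this
  linarith [this]

lemma WW_pos {t : ℝ} (hN : 2 ≤ N) (hM : 1 ≤ M) (hMN : M < N) (h0 : 0 ≤ t) (h1 : t < 1) :
    0 < WW N M t := by
  have := f1_eq_int hN hM hMN t
  have hf := f1_pos hMN hM h0 h1
  have hc := cc_pos hN hM hMN
  nlinarith

lemma f2_eq (hN : 2 ≤ N) (hM : 1 ≤ M) (hMN : M < N) (t : ℝ) :
    f2 N M t = t * (1-t) * (-(cc N M * w N M t)) + ((N-1:ℕ):ℝ) * t * f1 N M t := by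
  rw [← telescope N M hN hM hMN t]
  unfold f2 f1
  rw [Finset.mul_sum, Finset.mul_sum, ← Finset.sum_add_distrib]
  apply Finset.sum_congr rfl
  intro i hi
  have hi2 : i ≤ N - 2 := by have := mem_range.mp hi; omega
  unfold td
  rcases Nat.eq_zero_or_pos i with h0 | hpos
  · subst h0
    obtain ⟨k, hk⟩ : ∃ k, N = k + 2 := ⟨N - 2, by omega⟩
    subst hk
    simp only [Nat.add_sub_cancel, Nat.sub_zero, Nat.cast_zero,
      show k+2-1-0 = k+1 from by omega, show k+2-1 = k+1 from by omega,
      show k+2-2-0 = k from by omega]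
    push_cast
    ring
  · obtain ⟨j, hj⟩ : ∃ j, i = j + 1 := ⟨i - 1, by omega⟩
    subst hj
    have E1 : N-1-(j+1) = (N-2-(j+1)) + 1 := by omega
    have E3 : N-1 = (N-2-(j+1)) + (j+1) + 1 := by omega
    rw [E1, E3]
    simp only [pow_succ, Nat.add_sub_cancel]
    push_cast
    ring

lemma key_ineq {τ s : ℝ} (h0 : 0 ≤ τ) (hts : τ ≤ s) (h1 : s ≤ 1) :
    wd N M s * w N M τ ≤ wd N M τ * w N M s := by
  have hs0 : (0:ℝ) ≤ s := le_trans h0 hts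
  have hτ1 : τ ≤ 1 := le_trans hts h1
  unfold wd w
  rcases Nat.eq_zero_or_pos (M-1) with ha | ha
  · rcases Nat.eq_zero_or_pos (N-1-M) with hb | hb
    · simp [ha, hb]
    · obtain ⟨k, hk⟩ : ∃ k, N-1-M = k+1 := ⟨N-1-M-1, by omega⟩
      have e : N-2-M = k := by omega
      rw [ha, hk, e, show M-2 = 0 from by omega]
      simp only [Nat.cast_zero, zero_mul, zero_sub, pow_zero, mul_one, one_mul, Nat.cast_add,
        Nat.cast_one, pow_succ]
      have n1 : (0:ℝ) ≤ (1-τ)^k * (1-s)^k * (s - τ) :=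
        mul_nonneg (mul_nonneg (pow_nonneg (by linarith) k) (pow_nonneg (by linarith) k))
          (by linarith)
      nlinarith [n1, (by positivity : (0:ℝ) ≤ (k:ℝ)+1)]
  · obtain ⟨j, hj⟩ : ∃ j, M-1 = j+1 := ⟨M-1-1, by omega⟩
    have ej : M-2 = j := by omega
    rcases Nat.eq_zero_or_pos (N-1-M) with hb | hb
    · rw [hj, ej, hb, show N-2-M = 0 from by omega]
      simp only [Nat.cast_zero, zero_mul, sub_zero, pow_zero, mul_one, one_mul, Nat.cast_add,
        Nat.cast_one, pow_succ]
      have n1 : (0:ℝ) ≤ τ^j * s^j * (s - τ) :=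
        mul_nonneg (mul_nonneg (by positivity) (by positivity)) (by linarith)
      nlinarith [n1, (by positivity : (0:ℝ) ≤ (j:ℝ)+1)]
    · obtain ⟨k, hk⟩ : ∃ k, N-1-M = k+1 := ⟨N-1-M-1, by omega⟩
      have ek : N-2-M = k := by omega
      rw [hj, ej, hk, ek]
      simp only [Nat.cast_add, Nat.cast_one, pow_succ]
      have c1 : (0:ℝ) ≤ 1 - τ := by linarith
      have c2 : (0:ℝ) ≤ 1 - s := by linarith
      have n1 : (0:ℝ) ≤ τ^j * s^j * ((1-τ)^k * (1-s)^k) * ((1-τ) * (1-s)) * (s - τ) := by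
        have : (0:ℝ) ≤ s - τ := by linarith
        positivity
      have n2 : (0:ℝ) ≤ τ^j * s^j * ((1-τ)^k * (1-s)^k) * (τ * s) * (s - τ) := by
        have : (0:ℝ) ≤ s - τ := by linarith
        positivity
      nlinarith [n1, n2, (by positivity : (0:ℝ) ≤ (j:ℝ)+1), (by positivity : (0:ℝ) ≤ (k:ℝ)+1)]

lemma hz {t : ℝ} (h0 : 0 ≤ t) (h1 : t ≤ 1) :
    0 ≤ w N M t^2 + wd N M t * WW N M t := by
  have hftc : ∫ s in t..1, wd N M s = w N M 1 - w N M t :=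
    intervalIntegral.integral_eq_sub_of_hasDerivAt
      (fun x _ => hasDerivAt_w N M x) ((continuous_wd).intervalIntegrable t 1)
  have hmono : ∫ s in t..1, wd N M s * w N M t ≤ ∫ s in t..1, wd N M t * w N M s := by
    apply intervalIntegral.integral_mono_on h1
      ((continuous_wd.mul continuous_const).intervalIntegrable t 1)
      ((continuous_const.mul continuous_w).intervalIntegrable t 1)
    intro x hx
    exact key_ineq h0 hx.1 hx.2
  rw [intervalIntegral.integral_mul_const, hftc, intervalIntegral.integral_const_mul] at hmono
  have hw1 : 0 ≤ w N M 1 * w N M t :=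
    mul_nonneg (w_nonneg zero_le_one le_rfl) (w_nonneg h0 h1)
  have : wd N M t * WW N M t ≥ (w N M 1 - w N M t) * w N M t := hmono
  nlinarith

/-- hazard rate -/
noncomputable def BB (N M : ℕ) (τ : ℝ) : ℝ := w N M τ / WW N M τ

lemma hasDerivAt_BB (hN : 2 ≤ N) (hM : 1 ≤ M) (hMN : M < N) {t : ℝ} (h0 : 0 ≤ t) (h1 : t < 1) :
    HasDerivAt (BB N M) ((wd N M t * WW N M t + w N M t^2) / WW N M t^2) t := by
  have hW := WW_pos hN hM hMN h0 h1
  have h := (hasDerivAt_w N M t).div (hasDerivAt_WW (N := N) (M := M) t) hW.ne'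
  refine h.congr_deriv ?_
  ring

lemma BB_mono (hN : 2 ≤ N) (hM : 1 ≤ M) (hMN : M < N) : MonotoneOn (BB N M) (Ioo 0 1) := by
  have hderiv : ∀ x ∈ Ioo (0:ℝ) 1, HasDerivAt (BB N M)
      ((wd N M x * WW N M x + w N M x^2) / WW N M x^2) x :=
    fun x hx => hasDerivAt_BB hN hM hMN hx.1.le hx.2
  apply monotoneOn_of_deriv_nonneg (convex_Ioo 0 1)
  · intro x hx
    exact (hderiv x hx).continuousAt.continuousWithinAt
  · intro x hx
    rw [interior_Ioo] at hx
    exact (hderiv x hx).differentiableAt.differentiableWithinAt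
  · intro x hx
    rw [interior_Ioo] at hx
    rw [(hderiv x hx).deriv]
    have hW := WW_pos hN hM hMN hx.1.le hx.2
    have hnum := hz (N := N) (M := M) hx.1.le hx.2.le
    exact div_nonneg (by linarith [hnum]) (sq_nonneg _)

/-- the decreasing function -/
noncomputable def AA (D : ℕ) (τ : ℝ) : ℝ := (D:ℝ) * (1-τ)^(D-1) / (1 - (1-τ)^D)

lemma q_pos {D : ℕ} (hD : 1 ≤ D) {t : ℝ} (h0 : 0 < t) (h1 : t ≤ 1) : 0 < 1 - (1-t)^D := by
  have : (1-t)^D < 1 := by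
    rcases lt_or_eq_of_le h1 with h | h
    · exact pow_lt_one₀ (by linarith) (by linarith) (by omega)
    · subst h
      simp [zero_pow (show D ≠ 0 from by omega)]
  linarith

lemma AA_anti {D : ℕ} (hD : 1 ≤ D) : StrictAntiOn (AA D) (Ioo 0 1) := by
  intro x hx y hy hxy
  unfold AA
  have hqx := q_pos hD hx.1 hx.2.le
  have hqy := q_pos hD hy.1 hy.2.le
  rw [div_lt_div_iff₀ hqy hqx]
  obtain ⟨d, hd⟩ : ∃ d, D = d+1 := ⟨D-1, by omega⟩
  subst hd
  simp only [Nat.add_sub_cancel]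
  set u := 1 - y with hu
  set v := 1 - x with hv
  have hu0 : 0 < u := by simp only [hu]; linarith [hy.2]
  have hv0 : 0 < v := by simp only [hv]; linarith [hx.2]
  have huv : u < v := by simp only [hu, hv]; linarith
  have h1 : u^d ≤ v^d := pow_le_pow_left₀ hu0.le huv.le d
  have h2 : 0 < u^d * v^d * (v - u) :=
    mul_pos (mul_pos (pow_pos hu0 d) (pow_pos hv0 d)) (by linarith)
  have A1 : 0 ≤ ((d:ℝ)+1) * (v^d - u^d) := mul_nonneg (by positivity) (by linarith)
  have A2 : 0 < ((d:ℝ)+1) * (u^d*v^d*(v-u)) := mul_pos (by positivity) h2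
  simp only [pow_succ]
  push_cast
  nlinarith [A1, A2]

variable {D : ℕ}

noncomputable def Pd (N M D : ℕ) (τ : ℝ) : ℝ :=
  (D:ℝ) * (1-τ)^(D-1) * f1 N M τ - (1 - (1-τ)^D) * (cc N M * w N M τ)

lemma continuous_P : Continuous (P N M D) := by
  unfold P f1; fun_prop

lemma hasDerivAt_P (hN : 2 ≤ N) (hM : 1 ≤ M) (hMN : M < N) (t : ℝ) :
    HasDerivAt (P N M D) (Pd N M D t) t := by
  have hq : HasDerivAt (fun x : ℝ => 1 - (1-x)^D) ((D:ℝ)*(1-t)^(D-1)) t := by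
    have h := (((hasDerivAt_id t).const_sub 1).pow D).const_sub 1
    refine h.congr_deriv ?_
    simp [id_eq]
  have h := hq.mul (hasDerivAt_f1 hN hM hMN t)
  refine h.congr_deriv ?_
  unfold Pd
  ring

lemma Pd_eq (hN : 2 ≤ N) (hM : 1 ≤ M) (hMN : M < N) (hD : 1 ≤ D) {t : ℝ}
    (h0 : 0 < t) (h1 : t < 1) :
    Pd N M D t = P N M D t * (AA D t - BB N M t) := by
  have hq := q_pos hD h0 h1.le
  have hW := WW_pos hN hM hMN h0.le h1
  have hf1 : f1 N M t = cc N M * WW N M t := f1_eq_int hN hM hMN t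
  unfold Pd P AA BB
  rw [hf1]
  field_simp

lemma H_diff (hN : 2 ≤ N) (hM : 1 ≤ M) (hMN : M < N) (hD : 1 ≤ D) {t : ℝ}
    (h0 : 0 < t) (h1 : t < 1) :
    H1 N M t - H2 N D t = t * (1-t) * (AA D t - BB N M t) := by
  have hq := q_pos hD h0 h1.le
  have hW := WW_pos hN hM hMN h0.le h1
  have hcc := cc_pos hN hM hMN
  have hf : 0 < f1 N M t := f1_pos hMN hM h0.le h1
  have hf1 : f1 N M t = cc N M * WW N M t := f1_eq_int hN hM hMN t
  have hpow : (1-t)^D = (1-t)^(D-1)*(1-t) := by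
    rw [← pow_succ]
    congr 1
    omega
  unfold H1 H2 AA BB
  rw [f2_eq hN hM hMN t, Nat.cast_sub (by omega : 1 ≤ N), hpow]
  rw [hpow] at hq
  rw [hf1] at hf ⊢
  push_cast
  field_simp
  have hq' : 1 - (1 - t) * (1 - t) ^ (D - 1) ≠ 0 := by rw [mul_comm]; exact hq.ne'
  field_simp
  ring

end S13

open S13 in
theorem stmt13 (N M D : ℕ) (hN : 2 ≤ N) (hM : 1 ≤ M) (hMN : M < N) (hD : 1 ≤ D) :
    ∃ τs ∈ Ioo (0:ℝ) 1,
      H1 N M τs = H2 N D τs ∧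
      (∀ τ ∈ Ioo (0:ℝ) 1, H1 N M τ = H2 N D τ → τ = τs) ∧
      (∀ τ ∈ Icc (0:ℝ) 1, τ ≠ τs → P N M D τ < P N M D τs) := by
  classical
  have hP0 : P N M D 0 = 0 := by simp [P]
  have hP1 : P N M D 1 = 0 := by simp [P, f1_one hMN]
  have hPhalf : 0 < P N M D (1/2) := by
    apply mul_pos (q_pos hD (by norm_num) (by norm_num))
    exact f1_pos hMN hM (by norm_num) (by norm_num)
  obtain ⟨τs, hτsIcc, hmax⟩ := (isCompact_Icc : IsCompact (Icc (0:ℝ) 1)).exists_isMaxOn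
    (nonempty_Icc.mpr zero_le_one) ((continuous_P (N := N) (M := M) (D := D)).continuousOn)
  have hPτs : 0 < P N M D τs := lt_of_lt_of_le hPhalf (hmax (by norm_num : (1/2:ℝ) ∈ Icc (0:ℝ) 1))
  have hmem : τs ∈ Ioo (0:ℝ) 1 := by
    constructor
    · rcases eq_or_lt_of_le hτsIcc.1 with h | h
      · rw [← h] at hPτs; rw [hP0] at hPτs; linarith
      · exact h
    · rcases eq_or_lt_of_le hτsIcc.2 with h | h
      · rw [h] at hPτs; rw [hP1] at hPτs; linarith
      · exact h
  have hloc : IsLocalMax (P N M D) τs := hmax.isLocalMax (Icc_mem_nhds hmem.1 hmem.2)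
  have hd0 : Pd N M D τs = 0 := by
    have h := hloc.deriv_eq_zero
    rwa [(hasDerivAt_P hN hM hMN τs).deriv] at h
  have hAB : AA D τs = BB N M τs := by
    have h := Pd_eq hN hM hMN hD hmem.1 hmem.2
    rw [hd0] at h
    have := mul_eq_zero.mp h.symm
    rcases this with h' | h'
    · exact absurd h' hPτs.ne'
    · linarith [sub_eq_zero.mp h']
  -- key sign facts
  have hsign : ∀ x ∈ Ioo (0:ℝ) 1, x < τs → 0 < AA D x - BB N M x := by
    intro x hx hlt
    have h1 : AA D τs < AA D x := AA_anti hD hx hmem hlt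
    have h2 : BB N M x ≤ BB N M τs := BB_mono hN hM hMN hx hmem hlt.le
    linarith [hAB]
  have hsign' : ∀ x ∈ Ioo (0:ℝ) 1, τs < x → AA D x - BB N M x < 0 := by
    intro x hx hlt
    have h1 : AA D x < AA D τs := AA_anti hD hmem hx hlt
    have h2 : BB N M τs ≤ BB N M x := BB_mono hN hM hMN hmem hx hlt.le
    linarith [hAB]
  refine ⟨τs, hmem, ?_, ?_, ?_⟩
  · have h := H_diff hN hM hMN hD hmem.1 hmem.2
    rw [hAB] at h
    simp only [sub_self, mul_zero] at h
    linarith [h]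
  · intro τ hτ hH
    have h := H_diff hN hM hMN hD hτ.1 hτ.2
    rw [hH, sub_self] at h
    have hAB' : AA D τ = BB N M τ := by
      have hne : τ * (1-τ) ≠ 0 := by
        have : 0 < τ * (1-τ) := mul_pos hτ.1 (by linarith [hτ.2])
        exact this.ne'
      rcases mul_eq_zero.mp h.symm with h' | h'
      · exact absurd h' hne
      · linarith [sub_eq_zero.mp h']
    by_contra hne
    rcases lt_or_gt_of_ne hne with hlt | hgt
    · have := hsign τ hτ hlt; linarith [hAB']
    · have := hsign' τ hτ hgt; linarith [hAB']
  · intro τ hτ hne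
    rcases eq_or_lt_of_le hτ.1 with h0 | h0
    · rw [← h0, hP0]; exact hPτs
    rcases eq_or_lt_of_le hτ.2 with h1 | h1
    swap
    · -- τ ∈ Ioo 0 1
      have hτIoo : τ ∈ Ioo (0:ℝ) 1 := ⟨h0, h1⟩
      rcases lt_or_gt_of_ne hne with hlt | hgt
      · have hsm : StrictMonoOn (P N M D) (Icc τ τs) := by
          apply strictMonoOn_of_deriv_pos (convex_Icc _ _)
            ((continuous_P (N := N) (M := M) (D := D)).continuousOn)
          intro x hx
          rw [interior_Icc] at hx
          have hx01 : x ∈ Ioo (0:ℝ) 1 := ⟨lt_trans h0 hx.1, lt_trans hx.2 hmem.2⟩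
          rw [(hasDerivAt_P hN hM hMN x).deriv, Pd_eq hN hM hMN hD hx01.1 hx01.2]
          exact mul_pos (mul_pos (q_pos hD hx01.1 hx01.2.le) (f1_pos hMN hM hx01.1.le hx01.2))
            (hsign x hx01 hx.2)
        exact hsm (left_mem_Icc.mpr hlt.le) (right_mem_Icc.mpr hlt.le) hlt
      · have hsm : StrictAntiOn (P N M D) (Icc τs τ) := by
          apply strictAntiOn_of_deriv_neg (convex_Icc _ _)
            ((continuous_P (N := N) (M := M) (D := D)).continuousOn)
          intro x hx
          rw [interior_Icc] at hx
          have hx01 : x ∈ Ioo (0:ℝ) 1 := ⟨lt_trans hmem.1 hx.1, lt_trans hx.2 h1⟩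
          rw [(hasDerivAt_P hN hM hMN x).deriv, Pd_eq hN hM hMN hD hx01.1 hx01.2]
          have := hsign' x hx01 hx.1
          have hPx : 0 < P N M D x :=
            mul_pos (q_pos hD hx01.1 hx01.2.le) (f1_pos hMN hM hx01.1.le hx01.2)
          exact mul_neg_of_pos_of_neg hPx this
        exact hsm (left_mem_Icc.mpr hgt.le) (right_mem_Icc.mpr hgt.le) hgt
    · rw [h1, hP1]; exact hPτs
end
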